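/- Let A ⊆ V and B ⊆ W be normalized state spaces with unit effects u_A, u_B. Let x ∈ A ⊠ B and suppose its A-marginal (id_V ⊗ u_B)(x) equals s, where s is an extreme point of A. Then there exists y ∈ B such that x = s ⊗ y; that is, states of the minimal tensor product with a pure marginal are product states. -/

import Mathlib

open scoped TensorProduct

noncomputable section

/-- The minimal tensor product of two state spaces: the convex hull of products of states. -/
def minTensor {V W : Type*} [AddCommGroup V] [Module ℝ V] [AddCommGroup W] [Module ℝ W]
    (A : Set V) (B : Set W) : Set (V ⊗[ℝ] W) :=
  convexHull ℝ {x : V ⊗[ℝ] W | ∃ a ∈ A, ∃ b ∈ B, x = a ⊗ₜ[ℝ] b}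

/-- The marginal map `id_V ⊗ e : V ⊗ W → V`, determined by `v ⊗ w ↦ e(w) • v`. -/
def marginal {V W : Type*} [AddCommGroup V] [Module ℝ V] [AddCommGroup W] [Module ℝ W]
    (e : W →ₗ[ℝ] ℝ) : (V ⊗[ℝ] W) →ₗ[ℝ] V :=
  (TensorProduct.rid ℝ V).toLinearMap.comp (TensorProduct.map LinearMap.id e)

lemma extreme_fix {V : Type*} [AddCommGroup V] [Module ℝ V] {A : Set V} (hAv : Convex ℝ A)
    {s : V} (hs : s ∈ Set.extremePoints ℝ A)
    {ι : Type} {t : Finset ι} {w : ι → ℝ} {z : ι → V}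
    (hw : ∀ i ∈ t, 0 ≤ w i) (hw1 : ∑ i ∈ t, w i = 1) (hz : ∀ i ∈ t, z i ∈ A)
    (hsum : ∑ i ∈ t, w i • z i = s) :
    ∀ i ∈ t, w i ≠ 0 → z i = s := by
  classical
  intro i hi hwi
  have hwi_le : w i ≤ 1 := by
    rw [← hw1]
    exact Finset.single_le_sum hw hi
  have hsplit : s = w i • z i + ∑ j ∈ t.erase i, w j • z j := by
    rw [← hsum]
    exact (Finset.add_sum_erase t (fun j => w j • z j) hi).symm
  have hwsplit : w i + ∑ j ∈ t.erase i, w j = 1 := by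
    rw [← hw1]
    exact Finset.add_sum_erase t w hi
  rcases eq_or_lt_of_le hwi_le with h1 | h1
  · -- w i = 1, so rest weights are 0
    have hrest : ∑ j ∈ t.erase i, w j = 0 := by linarith
    have hz0 : ∀ j ∈ t.erase i, w j = 0 := by
      intro j hj
      have := (Finset.sum_eq_zero_iff_of_nonneg
        (fun j hj => hw j (Finset.mem_of_mem_erase hj))).mp hrest
      exact this j hj
    have : ∑ j ∈ t.erase i, w j • z j = 0 :=
      Finset.sum_eq_zero fun j hj => by rw [hz0 j hj, zero_smul]
    rw [hsplit, this, add_zero, h1, one_smul]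
  · -- 0 < 1 - w i
    set c := 1 - w i with hc
    have hcpos : 0 < c := by simp [hc]; linarith
    have hwipos : 0 < w i := lt_of_le_of_ne (hw i hi) (Ne.symm hwi)
    set r := c⁻¹ • ∑ j ∈ t.erase i, w j • z j with hr
    have hrA : r ∈ A := by
      have : r = ∑ j ∈ t.erase i, (c⁻¹ * w j) • z j := by
        rw [hr, Finset.smul_sum]
        exact Finset.sum_congr rfl fun j hj => by rw [smul_smul]
      rw [this]
      refine hAv.sum_mem (fun j hj => mul_nonneg (by positivity)
        (hw j (Finset.mem_of_mem_erase hj))) ?_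
        (fun j hj => hz j (Finset.mem_of_mem_erase hj))
      rw [← Finset.mul_sum]
      have : ∑ j ∈ t.erase i, w j = c := by rw [hc]; linarith
      rw [this, inv_mul_cancel₀ (ne_of_gt hcpos)]
    have hmem : s ∈ openSegment ℝ (z i) r := by
      refine ⟨w i, c, hwipos, hcpos, by rw [hc]; ring, ?_⟩
      rw [hr, smul_inv_smul₀ (ne_of_gt hcpos)]
      exact hsplit.symm
    exact hs.2 (hz i hi) hrA hmem

/-- States of the minimal tensor product with a pure marginal are product states. -/
theorem pure_marginal_implies_product {V W : Type*}
    [NormedAddCommGroup V] [NormedSpace ℝ V] [FiniteDimensional ℝ V]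
    [NormedAddCommGroup W] [NormedSpace ℝ W] [FiniteDimensional ℝ W]
    (A : Set V) (hA : A.Nonempty) (hAc : IsCompact A) (hAv : Convex ℝ A)
    (B : Set W) (hB : B.Nonempty) (hBc : IsCompact B) (hBv : Convex ℝ B)
    (uA : V →ₗ[ℝ] ℝ) (huA : ∀ a ∈ A, uA a = 1)
    (uB : W →ₗ[ℝ] ℝ) (huB : ∀ b ∈ B, uB b = 1)
    (x : V ⊗[ℝ] W) (hx : x ∈ minTensor A B)
    (s : V) (hs : s ∈ Set.extremePoints ℝ A)
    (hmarg : marginal uB x = s) :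
    ∃ y ∈ B, x = s ⊗ₜ[ℝ] y := by
  rw [minTensor, convexHull_eq] at hx
  obtain ⟨ι, t, w, z, hw0, hw1, hzmem, hxeq⟩ := hx
  rw [Finset.centerMass_eq_of_sum_1 _ _ hw1] at hxeq
  choose a ha b hb hz using hzmem
  -- marginal computation
  have hmargterm : ∀ i (hi : i ∈ t), marginal uB (z i) = a i hi := by
    intro i hi
    rw [hz i hi]
    simp [marginal, huB _ (hb i hi)]
  have hsrep : ∑ i ∈ t.attach, w i • a i i.2 = s := by
    rw [← hmarg, ← hxeq, map_sum]
    rw [← Finset.sum_attach t (fun i => marginal uB (w i • z i))]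
    exact Finset.sum_congr rfl fun i _ => by rw [map_smul, hmargterm i i.2]
  have key : ∀ i : {x // x ∈ t}, i ∈ t.attach → w i ≠ 0 → a i i.2 = s := by
    have := extreme_fix hAv hs (t := t.attach) (w := fun i => w i)
      (z := fun i => a i i.2) (fun i _ => hw0 i i.2)
      (by rw [Finset.sum_attach t w]; exact hw1) (fun i _ => ha i i.2) hsrep
    exact this
  refine ⟨∑ i ∈ t.attach, w i • b i i.2, ?_, ?_⟩
  · exact hBv.sum_mem (fun i _ => hw0 i i.2)
      (by rw [Finset.sum_attach t w]; exact hw1) (fun i _ => hb i i.2)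
  · rw [← hxeq, ← Finset.sum_attach t (fun i => w i • z i), TensorProduct.tmul_sum]
    refine Finset.sum_congr rfl fun i _ => ?_
    rw [hz i i.2]
    rcases eq_or_ne (w i) 0 with h | h
    · simp [h]
    · rw [key i (Finset.mem_attach _ _) h, TensorProduct.tmul_smul]
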